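/- Let S be a lower subset of ℕ₀^d with |S| ≤ k and u_i = ∏_{j=1}^d √(2 i_j + 1) (Legendre weights). Then the weighted cardinality satisfies |S|_u = ∑_{i ∈ S} ∏_{j=1}^d (2 i_j + 1) ≤ k². -/

import Mathlib

def IsLowerMultiSet {d : ℕ} (S : Set (Fin d → ℕ)) : Prop :=
  ∀ i ∈ S, ∀ i' : Fin d → ℕ, (∀ j, i' j ≤ i j) → i' ∈ S

/-- Pairs `(a, b)` in `[0,n]²` with `max a b = n`. -/
def maxPairs (n : ℕ) : Finset (ℕ × ℕ) :=
  ((Finset.Iic n) ×ˢ (Finset.Iic n)).filter fun p => max p.1 p.2 = n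

lemma maxPairs_card (n : ℕ) : (maxPairs n).card = 2 * n + 1 := by
  have h : maxPairs n = ((Finset.Iic n) ×ˢ (Finset.Iic n)) \
      ((Finset.Iio n) ×ˢ (Finset.Iio n)) := by
    ext p
    simp only [maxPairs, Finset.mem_filter, Finset.mem_sdiff, Finset.mem_product,
      Finset.mem_Iic, Finset.mem_Iio]
    constructor
    · rintro ⟨⟨h1, h2⟩, h3⟩
      refine ⟨⟨h1, h2⟩, ?_⟩
      rintro ⟨l1, l2⟩
      omega
    · rintro ⟨⟨h1, h2⟩, h3⟩
      refine ⟨⟨h1, h2⟩, ?_⟩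
      rcases max_cases p.1 p.2 with ⟨he, _⟩ | ⟨he, _⟩ <;> omega
  rw [h, Finset.card_sdiff_of_subset (by
    intro p hp
    simp only [Finset.mem_product, Finset.mem_Iio] at hp
    simp only [Finset.mem_product, Finset.mem_Iic]
    omega)]
  simp [Finset.card_product, Nat.card_Iic, Nat.card_Iio]
  ring_nf
  omega

theorem legendre_weighted_card_lower_set (d k : ℕ) (S : Finset (Fin d → ℕ))
    (hlower : IsLowerMultiSet (↑S : Set (Fin d → ℕ))) (hcard : S.card ≤ k) :
    ∑ i ∈ S, ∏ j, (2 * i j + 1) ≤ k ^ 2 := by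
  classical
  set F : (Fin d → ℕ) × (Fin d → ℕ) → (Fin d → ℕ) :=
    fun p j => max (p.1 j) (p.2 j) with hF
  -- fiber of F over i, inside S ×ˢ S, equals all pairs with max = i
  have fiber_card : ∀ i ∈ S,
      ((S ×ˢ S).filter fun p => F p = i).card = ∏ j, (2 * i j + 1) := by
    intro i hi
    have hset : ((S ×ˢ S).filter fun p => F p = i) =
        (Fintype.piFinset fun j => maxPairs (i j)).image
          (fun f => (fun j => (f j).1, fun j => (f j).2)) := by
      ext p
      simp only [Finset.mem_filter, Finset.mem_product, Finset.mem_image,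
        Fintype.mem_piFinset, maxPairs, Finset.mem_filter, Finset.mem_Iic]
      constructor
      · rintro ⟨⟨h1, h2⟩, h3⟩
        refine ⟨fun j => (p.1 j, p.2 j), fun j => ?_, ?_⟩
        · have := congrFun h3 j
          simp only [hF] at this
          exact ⟨⟨this ▸ le_max_left _ _, this ▸ le_max_right _ _⟩, this⟩
        · exact Prod.ext (funext fun j => rfl) (funext fun j => rfl)
      · rintro ⟨f, hf, rfl⟩
        have hmax : ∀ j, max (f j).1 (f j).2 = i j := fun j => (hf j).2
        have h1 : ∀ j, (f j).1 ≤ i j := fun j => (hf j).1.1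
        have h2 : ∀ j, (f j).2 ≤ i j := fun j => (hf j).1.2
        refine ⟨⟨hlower i hi _ h1, hlower i hi _ h2⟩, funext fun j => hmax j⟩
    rw [hset, Finset.card_image_of_injective _ (by
      intro f g hfg
      funext j
      have h1 := congrFun (congrArg Prod.fst hfg) j
      have h2 := congrFun (congrArg Prod.snd hfg) j
      exact Prod.ext h1 h2)]
    rw [Fintype.card_piFinset]
    exact Finset.prod_congr rfl fun j _ => maxPairs_card (i j)
  -- sum of fibers over S ≤ total card
  have hsub : S ⊆ (S ×ˢ S).image F := by
    intro i hi
    refine Finset.mem_image.2 ⟨(i, i), Finset.mem_product.2 ⟨hi, hi⟩, ?_⟩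
    funext j; simp [hF]
  calc ∑ i ∈ S, ∏ j, (2 * i j + 1)
      = ∑ i ∈ S, ((S ×ˢ S).filter fun p => F p = i).card :=
        (Finset.sum_congr rfl fun i hi => (fiber_card i hi).symm)
    _ ≤ ∑ i ∈ (S ×ˢ S).image F, ((S ×ˢ S).filter fun p => F p = i).card :=
        Finset.sum_le_sum_of_subset hsub
    _ = (S ×ˢ S).card := (Finset.card_eq_sum_card_fiberwise (fun p hp =>
          Finset.mem_image_of_mem F hp)).symm
    _ = S.card * S.card := Finset.card_product S S
    _ ≤ k * k := Nat.mul_le_mul hcard hcard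
    _ = k ^ 2 := (sq k).symm
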